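/- Let α > 0 with α ≠ 1, β > 0, M > 0 and N ∈ ℝ, and define on ℝ × [0,∞) the function u(x,t) = M·( (√α)^{1 + 1/√α} / (α − 1) )·e^{((1−√α)/2)·t}·( (β/√α)·e^{−α·t} + (1 + √α)·x·( √α·x + √(α·x² + β·e^{−α·t}) ) ) / ( √α·x + √(α·x² + β·e^{−α·t}) )^{1 + 1/√α} + N. Then u satisfies the partial differential equation u_t(x,t)·u_xx(x,t) = (1/2)·u_x(x,t)² at every point, and its local risk tolerance is −u_x(x,t)/u_xx(x,t) = √(α·x² + β·e^{−α·t}) for all (x,t) ∈ ℝ × [0,∞). -/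

import Mathlib

/-- Partial derivative in the first (wealth) argument. -/
noncomputable def pderivX (u : ℝ → ℝ → ℝ) (x t : ℝ) : ℝ := deriv (fun x' => u x' t) x

/-- Partial derivative in the second (time) argument. -/
noncomputable def pderivT (u : ℝ → ℝ → ℝ) (x t : ℝ) : ℝ := deriv (fun t' => u x t') t

/-- The forward utility corresponding (for `α ≠ 1`) to the asymptotically linear
local risk tolerance `r(x,t) = √(α·x² + β·e^{-α·t})`.  The powers with real exponent
`1 + 1/√α` are real (rpow) powers of positive bases. -/
noncomputable def forwardUtilityAlphaNeOne (α β M N x t : ℝ) : ℝ :=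
  M * (Real.sqrt α ^ ((1 : ℝ) + 1 / Real.sqrt α) / (α - 1))
      * Real.exp ((1 - Real.sqrt α) / 2 * t)
      * ((β / Real.sqrt α) * Real.exp (-α * t)
          + (1 + Real.sqrt α) * x
            * (Real.sqrt α * x + Real.sqrt (α * x^2 + β * Real.exp (-α * t))))
      / ((Real.sqrt α * x + Real.sqrt (α * x^2 + β * Real.exp (-α * t)))
          ^ ((1 : ℝ) + 1 / Real.sqrt α))
    + N

namespace FwdAux

/-- `R(x,t) = √(αx² + βe^{-αt})` -/
noncomputable def Rf (α β x t : ℝ) : ℝ := Real.sqrt (α * x^2 + β * Real.exp (-α * t))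

lemma Rsq (α β x t : ℝ) (h : 0 < α * x^2 + β * Real.exp (-α * t)) :
    Rf α β x t ^ 2 = α * x^2 + β * Real.exp (-α * t) := Real.sq_sqrt h.le

lemma Rpos (α β x t : ℝ) (hα : 0 < α) (hβ : 0 < β) : 0 < Rf α β x t :=
  Real.sqrt_pos.2 (by positivity)

lemma Zpos (α β x t : ℝ) (hα : 0 < α) (hβ : 0 < β) :
    0 < Real.sqrt α * x + Rf α β x t := by
  have h0 : (0:ℝ) < α * x^2 + β * Real.exp (-α * t) := by positivity
  have hR2 := Rsq α β x t h0
  have hR := Rpos α β x t hα hβ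
  have hs2 : Real.sqrt α * Real.sqrt α = α := Real.mul_self_sqrt hα.le
  have he : (0:ℝ) < β * Real.exp (-α * t) := by positivity
  nlinarith [sq_nonneg (Real.sqrt α * x + Rf α β x t)]

/-- Representation: `u = K · (e^{γt} · ((R+αx) · Z^{-1/√α})) + N`. -/
lemma u_rep (α β M N : ℝ) (hα : 0 < α) (hα1 : α ≠ 1) (hβ : 0 < β) (x t : ℝ) :
    forwardUtilityAlphaNeOne α β M N x t
      = (M * Real.sqrt α ^ ((1:ℝ)/Real.sqrt α) / (α - 1)) *
          (Real.exp ((1 - Real.sqrt α)/2 * t) *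
            ((Rf α β x t + α * x) *
              (Real.sqrt α * x + Rf α β x t) ^ (-(1/Real.sqrt α)))) + N := by
  have hs : 0 < Real.sqrt α := Real.sqrt_pos.2 hα
  have hs2 : Real.sqrt α * Real.sqrt α = α := Real.mul_self_sqrt hα.le
  have h0 : (0:ℝ) < α * x^2 + β * Real.exp (-α * t) := by positivity
  have hR2 := Rsq α β x t h0
  have hZ : 0 < Real.sqrt α * x + Rf α β x t := Zpos α β x t hα hβ
  have hα1' : α - 1 ≠ 0 := sub_ne_zero.2 hα1
  unfold forwardUtilityAlphaNeOne
  have hfold : Real.sqrt (α * x^2 + β * Real.exp (-α * t)) = Rf α β x t := rfl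
  rw [hfold, Real.rpow_add hZ, Real.rpow_add hs, Real.rpow_one, Real.rpow_one,
    Real.rpow_neg hZ.le]
  have hT : (0:ℝ) < (Real.sqrt α * x + Rf α β x t) ^ ((1:ℝ)/Real.sqrt α) :=
    Real.rpow_pos_of_pos hZ _
  set s := Real.sqrt α
  set R := Rf α β x t with hRdef
  set T := (s * x + R) ^ ((1:ℝ)/s) with hTdef
  have key : (β / s) * Real.exp (-α * t) + (1 + s) * x * (s * x + R)
      = (s * x + R) * (R + α * x) / s := by
    have h1 : β * Real.exp (-α * t) = R^2 - α * x^2 := by linarith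
    field_simp
    ring_nf at h1 ⊢
    linear_combination h1 + (x^2 + s*x^2 + x*R) * hs2
  rw [key]
  field_simp

end FwdAux

namespace FwdAux2
open FwdAux

/-- closed form of `u_x` -/
noncomputable def uxf (α β M x t : ℝ) : ℝ :=
  M * Real.sqrt α ^ ((1:ℝ)/Real.sqrt α) * Real.exp ((1 - Real.sqrt α)/2 * t)
    * (Real.sqrt α * x + Rf α β x t) ^ (-(1/Real.sqrt α))

lemma uxf_pos (α β M : ℝ) (hα : 0 < α) (hβ : 0 < β) (hM : 0 < M) (x t : ℝ) :
    0 < uxf α β M x t := by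
  have hs : 0 < Real.sqrt α := Real.sqrt_pos.2 hα
  have hZ := Zpos α β x t hα hβ
  unfold uxf
  have := Real.rpow_pos_of_pos hs ((1:ℝ)/Real.sqrt α)
  have := Real.rpow_pos_of_pos hZ (-(1/Real.sqrt α))
  positivity

lemma hasDerivAt_R (α β : ℝ) (hα : 0 < α) (hβ : 0 < β) (x t : ℝ) :
    HasDerivAt (fun x' => Rf α β x' t) (α * x / Rf α β x t) x := by
  have h0 : (0:ℝ) < α * x^2 + β * Real.exp (-α * t) := by positivity
  have hbase : HasDerivAt (fun x' : ℝ => α * x'^2 + β * Real.exp (-α * t)) (α * (2*x)) x := by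
    simpa using ((hasDerivAt_pow 2 x).const_mul α).add_const (β * Real.exp (-α * t))
  have h := hbase.sqrt h0.ne'
  have hR := Rpos α β x t hα hβ
  refine h.congr_deriv ?_
  unfold Rf
  rw [eq_div_iff (by positivity)]
  have : Real.sqrt (α * x ^ 2 + β * Real.exp (-α * t)) = Rf α β x t := rfl
  rw [this]
  field_simp [hR.ne']

lemma hasDerivAt_x_u (α β M N : ℝ) (hα : 0 < α) (hα1 : α ≠ 1) (hβ : 0 < β) (x t : ℝ) :
    HasDerivAt (fun x' => forwardUtilityAlphaNeOne α β M N x' t) (uxf α β M x t) x := by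
  have hs : 0 < Real.sqrt α := Real.sqrt_pos.2 hα
  have hs2 : Real.sqrt α * Real.sqrt α = α := Real.mul_self_sqrt hα.le
  have hα1' : α - 1 ≠ 0 := sub_ne_zero.2 hα1
  have hR := Rpos α β x t hα hβ
  have hZ := Zpos α β x t hα hβ
  have hrep : (fun x' => forwardUtilityAlphaNeOne α β M N x' t)
      = fun x' => (M * Real.sqrt α ^ ((1:ℝ)/Real.sqrt α) / (α - 1)) *
          (Real.exp ((1 - Real.sqrt α)/2 * t) *
            ((Rf α β x' t + α * x') *
              (Real.sqrt α * x' + Rf α β x' t) ^ (-(1/Real.sqrt α)))) + N := by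
    funext x'
    exact u_rep α β M N hα hα1 hβ x' t
  rw [hrep]
  have h1 : HasDerivAt (fun x' => Rf α β x' t + α * x') (α * x / Rf α β x t + α * 1) x :=
    (hasDerivAt_R α β hα hβ x t).add ((hasDerivAt_id x).const_mul α)
  have hZ' : HasDerivAt (fun x' => Real.sqrt α * x' + Rf α β x' t)
      (Real.sqrt α * 1 + α * x / Rf α β x t) x :=
    ((hasDerivAt_id x).const_mul (Real.sqrt α)).add (hasDerivAt_R α β hα hβ x t)
  have hA := hZ'.rpow_const (p := -(1/Real.sqrt α)) (Or.inl hZ.ne')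
  have H := ((h1.mul hA).const_mul
      (M * Real.sqrt α ^ ((1:ℝ)/Real.sqrt α) / (α - 1) * Real.exp ((1 - Real.sqrt α)/2 * t))).add_const N
  have hfe : (fun x' => M * Real.sqrt α ^ ((1:ℝ)/Real.sqrt α) / (α - 1) *
        Real.exp ((1 - Real.sqrt α)/2 * t) *
        ((Rf α β x' t + α * x') * (Real.sqrt α * x' + Rf α β x' t) ^ (-(1/Real.sqrt α))) + N)
      = (fun x' => M * Real.sqrt α ^ ((1:ℝ)/Real.sqrt α) / (α - 1) *
        (Real.exp ((1 - Real.sqrt α)/2 * t) *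
          ((Rf α β x' t + α * x') * (Real.sqrt α * x' + Rf α β x' t) ^ (-(1/Real.sqrt α)))) + N) := by
    funext y; ring
  simp only [Pi.mul_apply] at H
  rw [hfe] at H
  refine H.congr_deriv ?_
  rw [Real.rpow_sub hZ, Real.rpow_one]
  unfold uxf
  set s := Real.sqrt α with hsdef
  set R := Rf α β x t with hRdef
  set A := (s * x + R) ^ (-(1/s)) with hAdef
  have hss1 : s * s - 1 ≠ 0 := by rw [hs2]; exact hα1'
  rw [← hs2]
  field_simp
  ring_nf
  have hss2 : -1 + s ^ 2 ≠ 0 := by intro h; apply hss1; linear_combination h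
  field_simp
  ring

lemma pderivX_u_eq (α β M N : ℝ) (hα : 0 < α) (hα1 : α ≠ 1) (hβ : 0 < β) (x t : ℝ) :
    pderivX (forwardUtilityAlphaNeOne α β M N) x t = uxf α β M x t :=
  (hasDerivAt_x_u α β M N hα hα1 hβ x t).deriv

lemma hasDerivAt_x_ux (α β M : ℝ) (hα : 0 < α) (hβ : 0 < β) (x t : ℝ) :
    HasDerivAt (fun x' => uxf α β M x' t) (-(uxf α β M x t) / Rf α β x t) x := by
  have hs : 0 < Real.sqrt α := Real.sqrt_pos.2 hα
  have hs2 : Real.sqrt α * Real.sqrt α = α := Real.mul_self_sqrt hα.le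
  have hR := Rpos α β x t hα hβ
  have hZ := Zpos α β x t hα hβ
  have hZ' : HasDerivAt (fun x' => Real.sqrt α * x' + Rf α β x' t)
      (Real.sqrt α * 1 + α * x / Rf α β x t) x :=
    ((hasDerivAt_id x).const_mul (Real.sqrt α)).add (hasDerivAt_R α β hα hβ x t)
  have H := (hZ'.rpow_const (p := -(1/Real.sqrt α)) (Or.inl hZ.ne')).const_mul
      (M * Real.sqrt α ^ ((1:ℝ)/Real.sqrt α) * Real.exp ((1 - Real.sqrt α)/2 * t))
  unfold uxf
  refine H.congr_deriv ?_
  rw [Real.rpow_sub hZ, Real.rpow_one]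
  set s := Real.sqrt α with hsdef
  set R := Rf α β x t with hRdef
  set A := (s * x + R) ^ (-(1/s)) with hAdef
  rw [← hs2]
  field_simp
  ring

lemma pderivXX_eq (α β M N : ℝ) (hα : 0 < α) (hα1 : α ≠ 1) (hβ : 0 < β) (x t : ℝ) :
    pderivX (pderivX (forwardUtilityAlphaNeOne α β M N)) x t
      = -(uxf α β M x t) / Rf α β x t := by
  have hfe : (fun x' => pderivX (forwardUtilityAlphaNeOne α β M N) x' t)
      = fun x' => uxf α β M x' t :=
    funext fun x' => pderivX_u_eq α β M N hα hα1 hβ x' t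
  show deriv (fun x' => pderivX (forwardUtilityAlphaNeOne α β M N) x' t) x = _
  rw [hfe]
  exact (hasDerivAt_x_ux α β M hα hβ x t).deriv

lemma hasDerivAt_t_u (α β M N : ℝ) (hα : 0 < α) (hα1 : α ≠ 1) (hβ : 0 < β) (x t : ℝ) :
    HasDerivAt (fun t' => forwardUtilityAlphaNeOne α β M N x t')
      (-(1/2) * uxf α β M x t * Rf α β x t) t := by
  have hs : 0 < Real.sqrt α := Real.sqrt_pos.2 hα
  have hs2 : Real.sqrt α * Real.sqrt α = α := Real.mul_self_sqrt hα.le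
  have hα1' : α - 1 ≠ 0 := sub_ne_zero.2 hα1
  have h0 : (0:ℝ) < α * x^2 + β * Real.exp (-α * t) := by positivity
  have hR2 := Rsq α β x t h0
  have hR := Rpos α β x t hα hβ
  have hZ := Zpos α β x t hα hβ
  have hrep : (fun t' => forwardUtilityAlphaNeOne α β M N x t')
      = fun t' => (M * Real.sqrt α ^ ((1:ℝ)/Real.sqrt α) / (α - 1)) *
          (Real.exp ((1 - Real.sqrt α)/2 * t') *
            ((Rf α β x t' + α * x) *
              (Real.sqrt α * x + Rf α β x t') ^ (-(1/Real.sqrt α)))) + N := by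
    funext t'
    exact u_rep α β M N hα hα1 hβ x t'
  rw [hrep]
  have hE : HasDerivAt (fun t' => β * Real.exp (-α * t'))
      (β * (Real.exp (-α * t) * (-α * 1))) t :=
    (((hasDerivAt_id t).const_mul (-α)).exp).const_mul β
  have hbase : HasDerivAt (fun t' : ℝ => α * x^2 + β * Real.exp (-α * t'))
      (β * (Real.exp (-α * t) * (-α * 1))) t := hE.const_add (α * x^2)
  have hRt : HasDerivAt (fun t' => Rf α β x t')
      ((β * (Real.exp (-α * t) * (-α * 1))) / (2 * Rf α β x t)) t := hbase.sqrt h0.ne'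
  have hZt : HasDerivAt (fun t' => Real.sqrt α * x + Rf α β x t')
      ((β * (Real.exp (-α * t) * (-α * 1))) / (2 * Rf α β x t)) t := hRt.const_add _
  have hAt := hZt.rpow_const (p := -(1/Real.sqrt α)) (Or.inl hZ.ne')
  have hP := (hRt.add_const (α * x)).mul hAt
  have hEx : HasDerivAt (fun t' => Real.exp ((1 - Real.sqrt α)/2 * t'))
      (Real.exp ((1 - Real.sqrt α)/2 * t) * ((1 - Real.sqrt α)/2 * 1)) t :=
    ((hasDerivAt_id t).const_mul ((1 - Real.sqrt α)/2)).exp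
  have H := ((hEx.mul hP).const_mul
      (M * Real.sqrt α ^ ((1:ℝ)/Real.sqrt α) / (α - 1))).add_const N
  simp only [Pi.mul_apply] at H
  refine H.congr_deriv ?_
  rw [Real.rpow_sub hZ, Real.rpow_one]
  unfold uxf
  set s := Real.sqrt α with hsdef
  set R := Rf α β x t with hRdef
  set A := (s * x + R) ^ (-(1/s)) with hAdef
  have hss1 : s * s - 1 ≠ 0 := by rw [hs2]; exact hα1'
  have hexp_eq : Real.exp (-α * t) = (R^2 - α * x^2)/β := by
    rw [eq_div_iff hβ.ne']
    linarith
  rw [hexp_eq, ← hs2]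
  field_simp
  ring_nf
  have hss2 : -1 + s ^ 2 ≠ 0 := by intro h; apply hss1; linear_combination h
  field_simp
  ring

lemma pderivT_u_eq (α β M N : ℝ) (hα : 0 < α) (hα1 : α ≠ 1) (hβ : 0 < β) (x t : ℝ) :
    pderivT (forwardUtilityAlphaNeOne α β M N) x t
      = -(1/2) * uxf α β M x t * Rf α β x t :=
  (hasDerivAt_t_u α β M N hα hα1 hβ x t).deriv

end FwdAux2

/-- **Forward utility for `α ≠ 1`.** For `α > 0`, `α ≠ 1`, `β > 0`, `M > 0`, `N ∈ ℝ`,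
the function
`u(x,t) = M·((√α)^{1+1/√α}/(α−1))·e^{((1−√α)/2)·t}·((β/√α)·e^{−α·t} + (1+√α)·x·(√α·x + √(α·x²+β·e^{−α·t}))) / (√α·x + √(α·x²+β·e^{−α·t}))^{1+1/√α} + N`
satisfies `u_t · u_xx = (1/2) · u_x²` on `ℝ × [0,∞)`, and its local risk tolerance is
`-u_x/u_xx = √(α·x² + β·e^{−α·t})`. -/
theorem forwardUtilityAlphaNeOne_forward (α β M N : ℝ)
    (hα : 0 < α) (hα1 : α ≠ 1) (hβ : 0 < β) (hM : 0 < M) :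
    ∀ x t : ℝ, 0 ≤ t →
      (pderivT (forwardUtilityAlphaNeOne α β M N) x t
          * pderivX (pderivX (forwardUtilityAlphaNeOne α β M N)) x t
        = (1/2) * (pderivX (forwardUtilityAlphaNeOne α β M N) x t)^2)
      ∧ (-(pderivX (forwardUtilityAlphaNeOne α β M N) x t)
            / pderivX (pderivX (forwardUtilityAlphaNeOne α β M N)) x t
          = Real.sqrt (α * x^2 + β * Real.exp (-α * t))) := by
  intro x t ht
  have hR := FwdAux.Rpos α β x t hα hβ
  have hu := FwdAux2.uxf_pos α β M hα hβ hM x t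
  rw [FwdAux2.pderivX_u_eq α β M N hα hα1 hβ x t,
    FwdAux2.pderivXX_eq α β M N hα hα1 hβ x t,
    FwdAux2.pderivT_u_eq α β M N hα hα1 hβ x t]
  constructor
  · field_simp
  · show _ = FwdAux.Rf α β x t
    rw [div_div_eq_mul_div, mul_comm, mul_div_assoc, div_self (neg_ne_zero.2 hu.ne'), mul_one]
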